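/- (Reflection principle, upper bound.) Suppose i < u and j < u. Then the number of integer grid bridges from i to j with B upward jumps that attain the value u at some index (i.e., ω k = u for some k ≤ K) equals C(K, B_u), where B_u = B − j + u. In particular, the set of bridges touching u is equinumerous with the set of unrestricted K-step ±1 paths from i ending at the reflected endpoint 2u − j. -/

import Mathlib

/-- An integer grid bridge from `i` to `j` with `B` upward jumps and `D` downward
jumps. -/
def IsBridge (i j : ℤ) (B D : ℕ) (ω : Fin (B + D + 1) → ℤ) : Prop :=
  ω 0 = i ∧ ω (Fin.last (B + D)) = j ∧
    (∀ k : Fin (B + D), |ω k.succ - ω k.castSucc| = 1) ∧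
    (Finset.univ.filter (fun k : Fin (B + D) => ω k.succ = ω k.castSucc + 1)).card = B

namespace ReflectionCountAux

def Steps {K : ℕ} (ω : Fin (K+1) → ℤ) : Prop :=
  ∀ k : Fin K, |ω k.succ - ω k.castSucc| = 1

def UpSet {K : ℕ} (ω : Fin (K+1) → ℤ) : Finset (Fin K) :=
  Finset.univ.filter (fun k => ω k.succ = ω k.castSucc + 1)

lemma step_cases {K : ℕ} {ω : Fin (K+1) → ℤ} (hs : Steps ω) (k : Fin K) :
    ω k.succ = ω k.castSucc + 1 ∨ ω k.succ = ω k.castSucc - 1 := by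
  have := hs k
  rcases abs_eq (by norm_num : (0:ℤ) ≤ 1) |>.mp this with h | h
  · left; linarith
  · right; linarith

lemma mem_upSet {K : ℕ} {ω : Fin (K+1) → ℤ} {k : Fin K} :
    k ∈ UpSet ω ↔ ω k.succ = ω k.castSucc + 1 := by
  simp [UpSet]

lemma endpoint_eq {K : ℕ} {ω : Fin (K+1) → ℤ} (hs : Steps ω) :
    ω (Fin.last K) - ω 0 = 2 * (UpSet ω).card - K := by
  classical
  set f : ℕ → ℤ := fun n => ω ⟨min n K, by omega⟩ with hf
  have key : ∀ k : Fin K, f (k.val + 1) - f k.val = ω k.succ - ω k.castSucc := by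
    intro k
    have h1 : f (k.val + 1) = ω k.succ := by
      simp only [hf]; congr 1; apply Fin.ext; simp
    have h2 : f k.val = ω k.castSucc := by
      simp only [hf]; congr 1; apply Fin.ext; simp
    rw [h1, h2]
  have tele : ∑ n ∈ Finset.range K, (f (n+1) - f n) = f K - f 0 :=
    Finset.sum_range_sub f K
  have hK : f K = ω (Fin.last K) := by
    simp only [hf]; congr 1; apply Fin.ext; simp
  have h0 : f 0 = ω 0 := by
    simp only [hf]; congr 1
  have h2 : ∑ n ∈ Finset.range K, (f (n+1) - f n)
      = ∑ k : Fin K, (ω k.succ - ω k.castSucc) := by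
    rw [← Fin.sum_univ_eq_sum_range (fun n => f (n+1) - f n) K]
    exact Finset.sum_congr rfl fun k _ => key k
  have h3 : ∑ k : Fin K, (ω k.succ - ω k.castSucc)
      = ∑ k : Fin K, (if k ∈ UpSet ω then (1:ℤ) else -1) := by
    apply Finset.sum_congr rfl
    intro k _
    rcases step_cases hs k with h | h
    · rw [if_pos (mem_upSet.mpr h)]; linarith
    · have : ¬ (k ∈ UpSet ω) := by
        rw [mem_upSet]; intro h'; omega
      rw [if_neg this]; linarith
  have h4 : ∑ k : Fin K, (if k ∈ UpSet ω then (1:ℤ) else -1)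
      = 2 * (UpSet ω).card - K := by
    have : ∀ k : Fin K, (if k ∈ UpSet ω then (1:ℤ) else -1)
        = (if k ∈ UpSet ω then (2:ℤ) else 0) - 1 := by
      intro k; split <;> norm_num
    rw [Finset.sum_congr rfl fun k _ => this k, Finset.sum_sub_distrib]
    rw [Finset.sum_ite_mem, Finset.univ_inter, Finset.sum_const, Finset.sum_const]
    simp [mul_comm]
  rw [← hK, ← h0, ← tele, h2, h3, h4]

section
def hitSet {K : ℕ} (u : ℤ) (ω : Fin (K+1) → ℤ) : Set ℕ :=
  {n | ∃ h : n < K + 1, ω ⟨n, h⟩ = u}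

noncomputable def tau {K : ℕ} (u : ℤ) (ω : Fin (K+1) → ℤ) : ℕ := sInf (hitSet u ω)

noncomputable def reflPath {K : ℕ} (u : ℤ) (ω : Fin (K+1) → ℤ) : Fin (K+1) → ℤ :=
  fun k => if k.val < tau u ω then ω k else 2*u - ω k

variable {K : ℕ} {u : ℤ} {ω : Fin (K+1) → ℤ}

lemma tau_mem (h : ∃ k, ω k = u) : tau u ω ∈ hitSet u ω := by
  obtain ⟨k, hk⟩ := h
  exact Nat.sInf_mem ⟨k.val, ⟨k.isLt, by simpa using hk⟩⟩

lemma tau_lt (h : ∃ k, ω k = u) : tau u ω < K + 1 := (tau_mem h).1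

lemma tau_hit (h : ∃ k, ω k = u) : ω ⟨tau u ω, tau_lt h⟩ = u := (tau_mem h).2

lemma tau_min {n : ℕ} (hn : n < tau u ω) (h : n < K + 1) : ω ⟨n, h⟩ ≠ u := by
  intro he
  exact Nat.notMem_of_lt_sInf hn ⟨h, he⟩

lemma refl_low (h : ∃ k, ω k = u) {k : Fin (K+1)} (hk : k.val ≤ tau u ω) :
    reflPath u ω k = ω k := by
  unfold reflPath
  split_ifs with h1
  · rfl
  · have hkt : k.val = tau u ω := by omega
    have : ω k = u := by
      have := tau_hit h
      rwa [show (⟨tau u ω, tau_lt h⟩ : Fin (K+1)) = k from Fin.ext hkt.symm] at this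
    rw [this]; ring

lemma refl_high {k : Fin (K+1)} (hk : tau u ω ≤ k.val) :
    reflPath u ω k = 2*u - ω k := by
  unfold reflPath
  rw [if_neg (by omega)]

lemma refl_hitIff (k : Fin (K+1)) : reflPath u ω k = u ↔ ω k = u := by
  unfold reflPath
  split_ifs with h1
  · rfl
  · constructor <;> (intro h; omega)

lemma tau_refl : tau u (reflPath u ω) = tau u ω := by
  unfold tau
  congr 1
  ext n
  unfold hitSet
  simp only [Set.mem_setOf_eq]
  constructor
  · rintro ⟨h, he⟩; exact ⟨h, (refl_hitIff _).mp he⟩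
  · rintro ⟨h, he⟩; exact ⟨h, (refl_hitIff _).mpr he⟩

lemma refl_apply (k : Fin (K+1)) :
    reflPath u ω k = if k.val < tau u ω then ω k else 2*u - ω k := rfl

lemma refl_refl : reflPath u (reflPath u ω) = ω := by
  funext k
  rw [refl_apply (ω := reflPath u ω), tau_refl, refl_apply]
  split_ifs with h1
  · rfl
  · ring

lemma refl_steps (h : ∃ k, ω k = u) (hs : Steps ω) : Steps (reflPath u ω) := by
  intro k
  rcases le_or_gt (k.val + 1) (tau u ω) with hc | hc
  · rw [refl_low h (by simp [Fin.val_succ]; omega),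
        refl_low h (by simp [Fin.coe_castSucc]; omega)]
    exact hs k
  · rw [refl_high (by simp [Fin.val_succ]; omega),
        refl_high (by simp [Fin.coe_castSucc]; omega)]
    rw [show 2*u - ω k.succ - (2*u - ω k.castSucc) = -(ω k.succ - ω k.castSucc) by ring,
        abs_neg]
    exact hs k

lemma refl_zero (h : ∃ k, ω k = u) : reflPath u ω 0 = ω 0 :=
  refl_low h (by simp)

lemma refl_last (h : ∃ k, ω k = u) :
    reflPath u ω (Fin.last K) = 2*u - ω (Fin.last K) :=
  refl_high (by have := tau_lt h; simp [Fin.last]; omega)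

lemma refl_hits (h : ∃ k, ω k = u) : ∃ k, reflPath u ω k = u := by
  obtain ⟨k, hk⟩ := h
  exact ⟨k, (refl_hitIff k).mpr hk⟩

lemma exists_hit (hs : Steps ω) (h0 : ω 0 < u) (hK : u < ω (Fin.last K)) :
    ∃ k, ω k = u := by
  classical
  have hp : ∃ n, ∃ h : n < K + 1, u ≤ ω ⟨n, h⟩ :=
    ⟨K, by omega, by rw [show (⟨K, by omega⟩ : Fin (K+1)) = Fin.last K from rfl]; exact hK.le⟩
  set m := Nat.find hp with hm
  obtain ⟨hlt, hge⟩ := Nat.find_spec hp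
  have hm0 : m ≠ 0 := by
    intro h
    rw [hm] at h
    have := Nat.find_spec hp
    rw [h] at this
    obtain ⟨h1, h2⟩ := this
    rw [show (⟨0, h1⟩ : Fin (K+1)) = 0 from rfl] at h2
    omega
  obtain ⟨m', hm'⟩ : ∃ m', m = m' + 1 := ⟨m - 1, by omega⟩
  have hmin : ¬ ∃ h : m' < K + 1, u ≤ ω ⟨m', h⟩ := Nat.find_min hp (by omega)
  have hm'lt : m' < K + 1 := by omega
  push_neg at hmin
  have hlt' : ω ⟨m', hm'lt⟩ < u := by
    have := hmin hm'lt
    omega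
  have hm'K : m' < K := by
    have : m ≤ K := Nat.find_le ⟨by omega, by
      rw [show (⟨K, by omega⟩ : Fin (K+1)) = Fin.last K from rfl]; exact hK.le⟩
    omega
  have hstep := hs ⟨m', hm'K⟩
  have hsucc : (⟨m', hm'K⟩ : Fin K).succ = ⟨m, hlt⟩ := Fin.ext (by simp [hm'])
  have hcast : (⟨m', hm'K⟩ : Fin K).castSucc = ⟨m', hm'lt⟩ := Fin.ext (by simp)
  rw [hsucc, hcast] at hstep
  have hge' : u ≤ ω ⟨m, hlt⟩ := hge
  refine ⟨⟨m, hlt⟩, ?_⟩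
  rcases abs_eq (by norm_num : (0:ℤ) ≤ 1) |>.mp hstep with h | h <;> omega

end
section
def pathOf (i : ℤ) {K : ℕ} (S : Finset (Fin K)) : Fin (K+1) → ℤ :=
  fun k => i + ∑ m ∈ Finset.univ.filter (fun m : Fin K => m.val < k.val),
    (if m ∈ S then (1:ℤ) else -1)

variable {i : ℤ} {K : ℕ} {S : Finset (Fin K)}

lemma pathOf_zero : pathOf i S 0 = i := by
  unfold pathOf
  rw [Finset.filter_false_of_mem (by intro m _; simp)]
  simp

lemma pathOf_step (k : Fin K) :
    pathOf i S k.succ - pathOf i S k.castSucc = (if k ∈ S then (1:ℤ) else -1) := by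
  unfold pathOf
  have hf : Finset.univ.filter (fun m : Fin K => m.val < k.succ.val)
      = insert k (Finset.univ.filter (fun m : Fin K => m.val < k.castSucc.val)) := by
    ext m
    simp only [Finset.mem_filter, Finset.mem_univ, true_and, Finset.mem_insert,
      Fin.val_succ, Fin.coe_castSucc]
    constructor
    · intro h
      rcases eq_or_lt_of_le (Nat.lt_succ_iff.mp h) with h' | h'
      · left; exact Fin.ext h'
      · right; exact h'
    · rintro (rfl | h) <;> omega
  have hk : k ∉ Finset.univ.filter (fun m : Fin K => m.val < k.castSucc.val) := by
    simp
  rw [hf, Finset.sum_insert hk]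
  ring

lemma pathOf_steps : Steps (pathOf i S) := by
  intro k
  rw [pathOf_step k]
  split <;> norm_num

lemma upSet_pathOf : UpSet (pathOf i S) = S := by
  ext k
  rw [mem_upSet]
  have := pathOf_step (i := i) (S := S) k
  constructor
  · intro h
    rw [h] at this
    by_contra hk
    rw [if_neg hk] at this
    omega
  · intro hk
    rw [if_pos hk] at this
    omega

lemma pathOf_last : pathOf i S (Fin.last K) = i + 2 * S.card - K := by
  unfold pathOf
  have hf : Finset.univ.filter (fun m : Fin K => m.val < (Fin.last K).val)
      = Finset.univ := by
    ext m; simp [Fin.last]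
  rw [hf]
  have : ∀ k : Fin K, (if k ∈ S then (1:ℤ) else -1)
      = (if k ∈ S then (2:ℤ) else 0) - 1 := by
    intro k; split <;> norm_num
  rw [Finset.sum_congr rfl fun k _ => this k, Finset.sum_sub_distrib]
  rw [Finset.sum_ite_mem, Finset.univ_inter, Finset.sum_const, Finset.sum_const]
  simp [mul_comm]
  ring

lemma pathOf_upSet {ω : Fin (K+1) → ℤ} (h0 : ω 0 = i) (hs : Steps ω) :
    pathOf i (UpSet ω) = ω := by
  have key : ∀ n (h : n < K + 1), pathOf i (UpSet ω) ⟨n, h⟩ = ω ⟨n, h⟩ := by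
    intro n
    induction n with
    | zero =>
      intro h
      rw [show (⟨0, h⟩ : Fin (K+1)) = 0 from rfl, pathOf_zero, h0]
    | succ n ih =>
      intro h
      have hnK : n < K := by omega
      have hstep := pathOf_step (i := i) (S := UpSet ω) ⟨n, hnK⟩
      have hsucc : (⟨n, hnK⟩ : Fin K).succ = ⟨n + 1, h⟩ := Fin.ext (by simp)
      have hcast : (⟨n, hnK⟩ : Fin K).castSucc = ⟨n, by omega⟩ := Fin.ext (by simp)
      rw [hsucc, hcast] at hstep
      have hval : (if (⟨n, hnK⟩ : Fin K) ∈ UpSet ω then (1:ℤ) else -1)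
          = ω (⟨n, hnK⟩ : Fin K).succ - ω (⟨n, hnK⟩ : Fin K).castSucc := by
        by_cases hup : (⟨n, hnK⟩ : Fin K) ∈ UpSet ω
        · rw [if_pos hup]
          have := mem_upSet.mp hup
          omega
        · rw [if_neg hup]
          have h1 := hs ⟨n, hnK⟩
          have h2 : ¬ (ω (⟨n, hnK⟩ : Fin K).succ = ω (⟨n, hnK⟩ : Fin K).castSucc + 1) :=
            fun h => hup (mem_upSet.mpr h)
          rcases abs_eq (by norm_num : (0:ℤ) ≤ 1) |>.mp h1 with h | h <;> omega
      rw [hsucc, hcast] at hval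
      rw [hval] at hstep
      have := ih (by omega)
      omega
  funext k
  have := key k.val k.isLt
  simpa using this

end
end ReflectionCountAux

open ReflectionCountAux

/-- Reflection principle, upper bound: if `i < u` and `j < u`, the number of integer
grid bridges from `i` to `j` with `B` upward jumps that attain the value `u` equals
`C(K, B_u)` with `B_u = B - j + u = B + (u - j)`. -/
theorem reflection_upper_count (i j u : ℤ) (B D : ℕ) (hj : j = i + B - D)
    (hiu : i < u) (hju : j < u) :
    Set.ncard {ω : Fin (B + D + 1) → ℤ |
        IsBridge i j B D ω ∧ ∃ k : Fin (B + D + 1), ω k = u}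
      = Nat.choose (B + D) (B + (u - j).toNat) := by

  classical
  set K := B + D with hK
  set Bu := B + (u - j).toNat with hBudef
  have hBu : (Bu : ℤ) = B + u - j := by
    have : ((u - j).toNat : ℤ) = u - j := Int.toNat_of_nonneg (by omega)
    push_cast [hBudef]
    omega
  -- the equivalence with subsets of size Bu
  have e : {ω : Fin (K + 1) → ℤ //
      ω ∈ {ω : Fin (K + 1) → ℤ | IsBridge i j B D ω ∧ ∃ k : Fin (K + 1), ω k = u}}
      ≃ {S : Finset (Fin K) // S.card = Bu} := by
    refine ⟨fun ⟨ω, hω⟩ => ⟨UpSet (reflPath u ω), ?_⟩,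
            fun ⟨S, hS⟩ => ⟨reflPath u (pathOf i S), ?_⟩, ?_, ?_⟩
    · -- card of reflected up-set is Bu
      obtain ⟨⟨h0, hlast, hsteps, hcard⟩, hhit⟩ := hω
      have hsteps' : Steps (reflPath u ω) := refl_steps hhit hsteps
      have h0' : reflPath u ω 0 = i := by rw [refl_zero hhit, h0]
      have hlast' : reflPath u ω (Fin.last K) = 2*u - j := by
        rw [refl_last hhit, hlast]
      have hend := endpoint_eq hsteps'
      rw [h0', hlast'] at hend
      have hcardle : (UpSet (reflPath u ω)).card ≤ K := by
        calc (UpSet (reflPath u ω)).card ≤ (Finset.univ : Finset (Fin K)).card :=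
              Finset.card_le_card (Finset.filter_subset _ _)
          _ = K := by simp
      omega
    · -- reflected pathOf is a bridge touching u
      have hsteps₁ : Steps (pathOf i S) := pathOf_steps
      have hlast₁ : pathOf i S (Fin.last K) = 2*u - j := by
        rw [pathOf_last, hS, hBu]
        omega
      have hhit₁ : ∃ k, pathOf i S k = u := by
        apply exists_hit hsteps₁
        · rw [pathOf_zero]; exact hiu
        · rw [hlast₁]; omega
      have hsteps₂ : Steps (reflPath u (pathOf i S)) := refl_steps hhit₁ hsteps₁
      have h0₂ : reflPath u (pathOf i S) 0 = i := by
        rw [refl_zero hhit₁, pathOf_zero]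
      have hlast₂ : reflPath u (pathOf i S) (Fin.last K) = j := by
        rw [refl_last hhit₁, hlast₁]; ring
      have hend := endpoint_eq hsteps₂
      rw [h0₂, hlast₂] at hend
      have hcardle : (UpSet (reflPath u (pathOf i S))).card ≤ K := by
        calc (UpSet (reflPath u (pathOf i S))).card
            ≤ (Finset.univ : Finset (Fin K)).card :=
              Finset.card_le_card (Finset.filter_subset _ _)
          _ = K := by simp
      have hcard₂ : (UpSet (reflPath u (pathOf i S))).card = B := by omega
      refine ⟨⟨h0₂, hlast₂, hsteps₂, hcard₂⟩, refl_hits hhit₁⟩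
    · -- left inverse
      rintro ⟨ω, hω⟩
      obtain ⟨⟨h0, hlast, hsteps, hcard⟩, hhit⟩ := hω
      apply Subtype.ext
      show reflPath u (pathOf i (UpSet (reflPath u ω))) = ω
      have hsteps' : Steps (reflPath u ω) := refl_steps hhit hsteps
      have h0' : reflPath u ω 0 = i := by rw [refl_zero hhit, h0]
      rw [pathOf_upSet h0' hsteps', refl_refl]
    · -- right inverse
      rintro ⟨S, hS⟩
      apply Subtype.ext
      show UpSet (reflPath u (reflPath u (pathOf i S))) = S
      rw [refl_refl, upSet_pathOf]
  calc Set.ncard {ω : Fin (K + 1) → ℤ |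
          IsBridge i j B D ω ∧ ∃ k : Fin (K + 1), ω k = u}
      = Nat.card {ω : Fin (K + 1) → ℤ //
          ω ∈ {ω : Fin (K + 1) → ℤ | IsBridge i j B D ω ∧ ∃ k : Fin (K + 1), ω k = u}} :=
        (Nat.card_coe_set_eq _).symm
    _ = Nat.card {S : Finset (Fin K) // S.card = Bu} := Nat.card_congr e
    _ = Fintype.card {S : Finset (Fin K) // S.card = Bu} := Nat.card_eq_fintype_card
    _ = (Finset.univ.filter fun S : Finset (Fin K) => S.card = Bu).card :=
        Fintype.card_subtype _
    _ = (Finset.powersetCard Bu (Finset.univ : Finset (Fin K))).card := by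
        rw [Finset.powersetCard_eq_filter, Finset.powerset_univ]
    _ = Nat.choose K Bu := by
        rw [Finset.card_powersetCard, Finset.card_univ, Fintype.card_fin]
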